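/- (Compatibility for the globules model.) For every x ∈ ∂A_g there exists a unit vector l ∈ ℝ^{(d+1)n} such that l·n_{ij}(x) ≥ r_- /(4 r_+ n √n) for every pair i ≠ j with |x_i − x_j| = x̆_i + x̆_j, l·n_{i+} ≥ r_- /(4 r_+ n √n) for every i with x̆_i = r_+, and l·n_{i−} ≥ r_- /(4 r_+ n √n) for every i with x̆_i = r_-. -/

import Mathlib

open scoped RealInnerProductSpace

noncomputable section

variable {H : Type*} [NormedAddCommGroup H] [InnerProductSpace ℝ H]

/-- The set `N^D_{x,α}` of inward unit normal vectors to `D` at `x` with constant `α`. -/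
def normalSet (D : Set H) (x : H) (α : ℝ) : Set H :=
  {v | ‖v‖ = 1 ∧ Metric.ball (x - α • v) α ∩ D = ∅}

/-- The set `N^D_x = ⋃_{α>0} N^D_{x,α}` of inward unit normal vectors to `D` at `x`. -/
def normalCone (D : Set H) (x : H) : Set H :=
  ⋃ α ∈ Set.Ioi (0 : ℝ), normalSet D x α

/-- `D` satisfies the Uniform Exterior Sphere property with constant `α`. -/
def UES (D : Set H) (α : ℝ) : Prop :=
  ∀ x ∈ frontier D, normalCone D x = normalSet D x α ∧ (normalSet D x α).Nonempty

/-- `D` satisfies the Uniform Normal Cone property with constants `β`, `δ`. -/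
def UNC (D : Set H) (β δ : ℝ) : Prop :=
  ∀ x ∈ frontier D, ∃ l : H, ‖l‖ = 1 ∧
    ∀ y ∈ frontier D, ‖y - x‖ ≤ δ → ∀ v ∈ normalCone D y, ⟪v, l⟫ ≥ Real.sqrt (1 - β ^ 2)

/-- The configuration space `ℝ^{(d+1)n}` of `n` globules in `ℝ^d`: each globule is a pair
(center, radius), and the whole space carries the Euclidean (`L²`) norm. -/
abbrev GConf (d n : ℕ) : Type :=
  PiLp 2 (fun _ : Fin n => WithLp 2 (EuclideanSpace ℝ (Fin d) × ℝ))

variable {d n : ℕ}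

/-- Center of the `i`-th globule. -/
def gC (x : GConf d n) (i : Fin n) : EuclideanSpace ℝ (Fin d) := (x i).fst

/-- Radius of the `i`-th globule. -/
def gR (x : GConf d n) (i : Fin n) : ℝ := (x i).snd

/-- Build a configuration from a family of (center, radius) pairs. -/
def mkG (f : Fin n → EuclideanSpace ℝ (Fin d) × ℝ) : GConf d n :=
  (WithLp.equiv 2 _).symm fun i => (WithLp.equiv 2 _).symm (f i)

/-- The set `A_g` of allowed globule configurations: all radii lie in `[r₋, r₊]` and the
globules are pairwise non-intersecting. -/
def Ag (d n : ℕ) (rm rp : ℝ) : Set (GConf d n) :=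
  {x | (∀ i, rm ≤ gR x i ∧ gR x i ≤ rp) ∧
    ∀ i j, i ≠ j → ‖gC x i - gC x j‖ ≥ gR x i + gR x j}

/-- The unit normal vector `n_{ij}(x)` to the collision constraint `|x_i−x_j| ≥ x̆_i+x̆_j`,
at a configuration `x` with `|x_i−x_j| = x̆_i+x̆_j > 0`. -/
def nij (x : GConf d n) (i j : Fin n) : GConf d n :=
  mkG fun k =>
    if k = i then ((2 * (gR x i + gR x j))⁻¹ • (gC x i - gC x j), -(1 / 2 : ℝ))
    else if k = j then ((2 * (gR x i + gR x j))⁻¹ • (gC x j - gC x i), -(1 / 2 : ℝ))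
    else 0

/-- The unit normal vector `n_{i+}` to the constraint `x̆_i ≤ r₊`: its only nonzero component
is the radius component of globule `i`, equal to `−1`. -/
def nplus (d n : ℕ) (i : Fin n) : GConf d n :=
  mkG fun k => if k = i then (0, (-1 : ℝ)) else 0

/-- The unit normal vector `n_{i−}` to the constraint `x̆_i ≥ r₋`: its only nonzero component
is the radius component of globule `i`, equal to `1`. -/
def nminus (d n : ℕ) (i : Fin n) : GConf d n :=
  mkG fun k => if k = i then (0, (1 : ℝ)) else 0

end

section GlobAux
open Finset
variable {d n : ℕ}

lemma inner_mkG (f g : Fin n → EuclideanSpace ℝ (Fin d) × ℝ) :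
    ⟪(mkG f : GConf d n), mkG g⟫ = ∑ i, (⟪(f i).1, (g i).1⟫ + (f i).2 * (g i).2) := by
  simp [mkG, PiLp.inner_apply, WithLp.prod_inner_apply]
  exact Finset.sum_congr rfl fun i _ => by ring

lemma continuous_gR (i : Fin n) : Continuous fun x : GConf d n => gR x i := by
  unfold gR; fun_prop

lemma continuous_gC (i : Fin n) : Continuous fun x : GConf d n => gC x i := by
  unfold gC; fun_prop

lemma isClosed_Ag (rm rp : ℝ) : IsClosed (Ag d n rm rp) := by
  have : Ag d n rm rp =
      (⋂ i, ({x : GConf d n | rm ≤ gR x i} ∩ {x : GConf d n | gR x i ≤ rp})) ∩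
      ⋂ i, ⋂ j, ⋂ (_ : i ≠ j), {x : GConf d n | gR x i + gR x j ≤ ‖gC x i - gC x j‖} := by
    ext y
    simp only [Ag, Set.mem_setOf_eq, Set.mem_inter_iff, Set.mem_iInter, ge_iff_le]
  rw [this]
  refine IsClosed.inter (isClosed_iInter fun i => IsClosed.inter ?_ ?_)
    (isClosed_iInter fun i => isClosed_iInter fun j => isClosed_iInter fun _ => ?_)
  · exact isClosed_le continuous_const (continuous_gR i)
  · exact isClosed_le (continuous_gR i) continuous_const
  · exact isClosed_le ((continuous_gR i).add (continuous_gR j))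
      (((continuous_gC i).sub (continuous_gC j)).norm)

lemma gR_mkG (f : Fin n → EuclideanSpace ℝ (Fin d) × ℝ) (i : Fin n) :
    gR (mkG f) i = (f i).2 := rfl

lemma gC_mkG (f : Fin n → EuclideanSpace ℝ (Fin d) × ℝ) (i : Fin n) :
    gC (mkG f) i = (f i).1 := rfl

lemma gR_zero (i : Fin n) : gR (0 : GConf d n) i = 0 := rfl

lemma gC_zero (i : Fin n) : gC (0 : GConf d n) i = 0 := rfl

end GlobAux

set_option maxHeartbeats 2000000

/-- Compatibility for the globules model. For every `x ∈ ∂A_g` there is a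
unit vector `l` whose inner products with all active constraint normals are at least
`r₋/(4 r₊ n √n)`. -/
theorem stmt_13 (d n : ℕ) (hd : 2 ≤ d) (hn : 1 ≤ n) (rm rp : ℝ)
    (h0 : 0 < rm) (hr : rm < rp)
    (x : GConf d n) (hx : x ∈ frontier (Ag d n rm rp)) :
    ∃ l : GConf d n, ‖l‖ = 1 ∧
      (∀ i j, i ≠ j → ‖gC x i - gC x j‖ = gR x i + gR x j →
        ⟪l, nij x i j⟫ ≥ rm / (4 * rp * n * Real.sqrt n)) ∧
      (∀ i, gR x i = rp → ⟪l, nplus d n i⟫ ≥ rm / (4 * rp * n * Real.sqrt n)) ∧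
      (∀ i, gR x i = rm → ⟪l, nminus d n i⟫ ≥ rm / (4 * rp * n * Real.sqrt n)) := by
  classical
  have hrp0 : 0 < rp := h0.trans hr
  have hrpm : 0 < rp - rm := sub_pos.mpr hr
  have hAg : x ∈ Ag d n rm rp := by
    have h1 := frontier_subset_closure hx
    rwa [(isClosed_Ag rm rp).closure_eq] at h1
  obtain ⟨hrad, _hsep⟩ := hAg
  have hN1 : (1:ℝ) ≤ (n:ℝ) := by exact_mod_cast hn
  have hn0 : (0:ℝ) < n := by linarith
  set s : ℝ := Real.sqrt n with hs
  have hs0 : 0 < s := Real.sqrt_pos.mpr hn0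
  have hs2 : s ^ 2 = n := Real.sq_sqrt hn0.le
  set c : ℝ := rm / (4 * rp * (n:ℝ) * s) with hc
  have hc0 : 0 < c := by rw [hc]; positivity
  set μ : ℝ := 2 * c / rm with hmu
  have hμ0 : 0 < μ := by rw [hmu]; positivity
  set ν : ℝ := 2 * c / (rp - rm) with hnu
  have hν0 : 0 < ν := by rw [hnu]; positivity
  have hμrm : μ * rm = 2 * c := by rw [hmu]; field_simp
  have hνc : ν * (rp - rm) = 2 * c := by rw [hnu]; field_simp
  -- the collision graph
  set G : SimpleGraph (Fin n) :=
    { Adj := fun i j => i ≠ j ∧ ‖gC x i - gC x j‖ = gR x i + gR x j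
      symm := by
        constructor
        rintro i j ⟨h1, h2⟩
        exact ⟨h1.symm, by rw [norm_sub_rev, h2, add_comm]⟩
      loopless := ⟨fun i h => h.1 rfl⟩ } with hG
  set rep : Fin n → Fin n := fun i => (G.connectedComponentMk i).out with hrepdef
  have hwalk : ∀ (i j : Fin n) (w : G.Walk i j),
      ‖gC x i - gC x j‖ ≤ 2 * rp * w.length := by
    intro i j w
    induction w with
    | nil => simp
    | @cons u v w' hadj p ih =>
      have h1 : ‖gC x u - gC x w'‖ ≤ ‖gC x u - gC x v‖ + ‖gC x v - gC x w'‖ :=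
        norm_sub_le_norm_sub_add_norm_sub _ _ _
      have h2 : ‖gC x u - gC x v‖ ≤ 2 * rp := by
        have h3 : ‖gC x u - gC x v‖ = gR x u + gR x v := hadj.2
        have hiu := (hrad u).2
        have hiv := (hrad v).2
        linarith
      have h3 : (0:ℝ) ≤ (p.length : ℝ) := by positivity
      simp only [SimpleGraph.Walk.length_cons]
      push_cast
      linarith
  have hreach : ∀ i j : Fin n, G.Reachable i j →
      ‖gC x i - gC x j‖ ≤ 2 * rp * ((n:ℝ) - 1) := by
    intro i j h
    obtain ⟨w⟩ := h
    have hlt := SimpleGraph.Walk.IsPath.length_lt w.toPath.2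
    rw [Fintype.card_fin] at hlt
    have hle : ((w.toPath.1).length : ℝ) ≤ (n:ℝ) - 1 := by
      have h4 : w.toPath.1.length + 1 ≤ n := hlt
      have h5 := (Nat.cast_le (α := ℝ)).mpr h4
      push_cast at h5
      linarith
    calc ‖gC x i - gC x j‖ ≤ 2 * rp * w.toPath.1.length := hwalk _ _ _
      _ ≤ 2 * rp * ((n:ℝ) - 1) := by
          have := mul_le_mul_of_nonneg_left hle (by positivity : (0:ℝ) ≤ 2 * rp)
          linarith
  have hrepadj : ∀ i j, G.Adj i j → rep i = rep j := by
    intro i j h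
    simp only [hrepdef]
    rw [SimpleGraph.ConnectedComponent.sound h.reachable]
  have hrepdist : ∀ i, ‖gC x i - gC x (rep i)‖ ≤ 2 * rp * ((n:ℝ) - 1) := by
    intro i
    exact hreach i (rep i)
      (SimpleGraph.ConnectedComponent.eq.mp ((G.connectedComponentMk i).out_eq).symm)
  set f : Fin n → EuclideanSpace ℝ (Fin d) × ℝ :=
    fun i => (μ • (gC x i - gC x (rep i)), ν * ((rp + rm) / 2 - gR x i)) with hf
  set l₀ : GConf d n := mkG f with hl0
  -- norm bound
  have hnorm2 : ⟪l₀, l₀⟫ ≤ 1 := by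
    rw [hl0, inner_mkG]
    have hterm : ∀ i : Fin n, ⟪(f i).1, (f i).1⟫ + (f i).2 * (f i).2 ≤
        μ ^ 2 * (2 * rp * ((n:ℝ) - 1)) ^ 2 + c ^ 2 := by
      intro i
      have h1 : ⟪(f i).1, (f i).1⟫ = μ ^ 2 * ‖gC x i - gC x (rep i)‖ ^ 2 := by
        simp only [hf]
        rw [real_inner_smul_left, real_inner_smul_right, real_inner_self_eq_norm_sq]
        ring
      have h2 : ‖gC x i - gC x (rep i)‖ ^ 2 ≤ (2 * rp * ((n:ℝ) - 1)) ^ 2 := by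
        have hnn := norm_nonneg (gC x i - gC x (rep i))
        have h6 := hrepdist i
        nlinarith
      have h3 : (f i).2 * (f i).2 ≤ c ^ 2 := by
        simp only [hf]
        have hri1 := (hrad i).1
        have hri2 := (hrad i).2
        have hsq : ((rp + rm) / 2 - gR x i) ^ 2 ≤ ((rp - rm) / 2) ^ 2 := by nlinarith
        have h4 : ν ^ 2 * ((rp + rm) / 2 - gR x i) ^ 2 ≤ ν ^ 2 * ((rp - rm) / 2) ^ 2 :=
          mul_le_mul_of_nonneg_left hsq (sq_nonneg ν)
        have h5 : ν ^ 2 * ((rp - rm) / 2) ^ 2 = c ^ 2 := by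
          linear_combination ((ν * (rp - rm) + 2 * c) / 4) * hνc
        nlinarith
      rw [h1]
      have := mul_le_mul_of_nonneg_left h2 (by positivity : (0:ℝ) ≤ μ ^ 2)
      linarith
    calc (∑ i, (⟪(f i).1, (f i).1⟫ + (f i).2 * (f i).2))
        ≤ ∑ _i : Fin n, (μ ^ 2 * (2 * rp * ((n:ℝ) - 1)) ^ 2 + c ^ 2) :=
          Finset.sum_le_sum fun i _ => hterm i
      _ = (n:ℝ) * (μ ^ 2 * (2 * rp * ((n:ℝ) - 1)) ^ 2 + c ^ 2) := by
          rw [Finset.sum_const, Finset.card_univ, Fintype.card_fin]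
          push_cast
          ring
      _ ≤ 1 := by
          have hc2 : c ^ 2 * (16 * rp ^ 2 * (n:ℝ) ^ 2 * (n:ℝ)) = rm ^ 2 := by
            rw [hc, div_pow, div_mul_eq_mul_div, div_eq_iff (by positivity)]
            have h7 : (4 * rp * (n:ℝ) * s) ^ 2 = 16 * rp ^ 2 * (n:ℝ) ^ 2 * s ^ 2 := by ring
            rw [h7, hs2]
          have hμ2 : μ ^ 2 * rm ^ 2 = 4 * c ^ 2 := by
            have h8 : (μ * rm) ^ 2 = (2 * c) ^ 2 := by rw [hμrm]
            nlinarith [h8]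
          have hμval : μ * (2 * rp * (n:ℝ) * s) = 1 := by
            rw [hmu, hc]
            field_simp
            ring
          have hμK : μ ^ 2 * (4 * rp ^ 2 * (n:ℝ) ^ 2 * (n:ℝ)) = 1 := by
            calc μ ^ 2 * (4 * rp ^ 2 * (n:ℝ) ^ 2 * (n:ℝ))
                = μ ^ 2 * (4 * rp ^ 2 * (n:ℝ) ^ 2 * s ^ 2) := by rw [hs2]
              _ = (μ * (2 * rp * (n:ℝ) * s)) ^ 2 := by ring
              _ = 1 := by rw [hμval]; norm_num
          have hrm2 : rm ^ 2 ≤ rp ^ 2 := by nlinarith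
          have hKpos : (0:ℝ) < 16 * rp ^ 2 * (n:ℝ) ^ 2 * (n:ℝ) := by positivity
          rw [← mul_le_mul_iff_left₀ hKpos]
          have expand : (n:ℝ) * (μ ^ 2 * (2 * rp * ((n:ℝ) - 1)) ^ 2 + c ^ 2)
                * (16 * rp ^ 2 * (n:ℝ) ^ 2 * (n:ℝ))
              = 16 * rp ^ 2 * (n:ℝ) * ((n:ℝ) - 1) ^ 2
                  * (μ ^ 2 * (4 * rp ^ 2 * (n:ℝ) ^ 2 * (n:ℝ)))
                + (n:ℝ) * (c ^ 2 * (16 * rp ^ 2 * (n:ℝ) ^ 2 * (n:ℝ))) := by ring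
          rw [expand, hμK, hc2]
          have hstep : rm ^ 2 ≤ 16 * rp ^ 2 * (2 * (n:ℝ) - 1) := by
            nlinarith [hrm2, hN1, sq_nonneg rp]
          have hstep2 := mul_le_mul_of_nonneg_left hstep hn0.le
          nlinarith [hstep2, sq_nonneg rp, hn0]
  -- inner products with active constraints
  have hplus : ∀ i, ⟪l₀, nplus d n i⟫ = ν * (gR x i - (rp + rm) / 2) := by
    intro i
    rw [hl0]
    unfold nplus
    rw [inner_mkG]
    rw [Finset.sum_eq_single_of_mem i (Finset.mem_univ _) (fun k _ hk => by simp [hf, hk])]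
    simp [hf]
    ring
  have hminus : ∀ i, ⟪l₀, nminus d n i⟫ = ν * ((rp + rm) / 2 - gR x i) := by
    intro i
    rw [hl0]
    unfold nminus
    rw [inner_mkG]
    rw [Finset.sum_eq_single_of_mem i (Finset.mem_univ _) (fun k _ hk => by simp [hf, hk])]
    simp [hf]
  have hcol : ∀ i j, i ≠ j → ‖gC x i - gC x j‖ = gR x i + gR x j →
      ⟪l₀, nij x i j⟫ ≥ c := by
    intro i j hij hact
    have hti : rm ≤ gR x i := (hrad i).1
    have htj : rm ≤ gR x j := (hrad j).1
    have ht0 : 0 < gR x i + gR x j := by linarith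
    have hrepij : rep i = rep j := hrepadj i j ⟨hij, hact⟩
    have hAB : ⟪gC x i - gC x (rep j), gC x i - gC x j⟫
        + ⟪gC x j - gC x (rep j), gC x j - gC x i⟫ = (gR x i + gR x j) ^ 2 := by
      have h1 : gC x j - gC x i = -(gC x i - gC x j) := by abel
      rw [h1, inner_neg_right, ← sub_eq_add_neg, ← inner_sub_left]
      have h2 : (gC x i - gC x (rep j)) - (gC x j - gC x (rep j)) = gC x i - gC x j := by abel
      rw [h2, real_inner_self_eq_norm_sq, hact]
    have hI : (2 * (gR x i + gR x j))⁻¹ * (gR x i + gR x j) = 1 / 2 := by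
      field_simp
    rw [hl0]
    unfold nij
    rw [inner_mkG]
    rw [Finset.sum_eq_add_of_mem i j (Finset.mem_univ _) (Finset.mem_univ _) hij
      (fun k _ hk => by simp [hf, hk.1, hk.2])]
    simp only [hf, eq_self_iff_true, if_true, ite_true, if_neg (Ne.symm hij)]
    rw [hrepij, real_inner_smul_left, real_inner_smul_left,
      real_inner_smul_right, real_inner_smul_right]
    have hsum : μ * ((2 * (gR x i + gR x j))⁻¹ * ⟪gC x i - gC x (rep j), gC x i - gC x j⟫)
        + μ * ((2 * (gR x i + gR x j))⁻¹ * ⟪gC x j - gC x (rep j), gC x j - gC x i⟫)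
        = μ * (gR x i + gR x j) / 2 := by
      linear_combination (μ * (2 * (gR x i + gR x j))⁻¹) * hAB
        + (μ * (gR x i + gR x j)) * hI
    have hp1 : 0 ≤ μ * (gR x i + gR x j - 2 * rm) := by
      apply mul_nonneg hμ0.le; linarith
    have hp2 : 0 ≤ ν * (gR x i + gR x j - 2 * rm) := by
      apply mul_nonneg hν0.le; linarith
    linarith [hsum, hp1, hp2, hμrm, hνc]
  -- conclude
  rcases eq_or_ne l₀ 0 with he | hne
  · -- degenerate case: no constraint can be active
    have hR0 : ∀ i, ν * ((rp + rm) / 2 - gR x i) = 0 := by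
      intro i
      have h1 := congrArg (fun z => gR z i) he
      simpa [hl0, gR_mkG, hf, gR_zero] using h1
    have hC0 : ∀ i, μ • (gC x i - gC x (rep i)) = (0 : EuclideanSpace ℝ (Fin d)) := by
      intro i
      have h1 := congrArg (fun z => gC z i) he
      simpa [hl0, gC_mkG, hf, gC_zero] using h1
    have hRm : ∀ i, gR x i = (rp + rm) / 2 := by
      intro i
      rcases mul_eq_zero.mp (hR0 i) with h | h
      · exact absurd h hν0.ne'
      · linarith
    have hCeq : ∀ i, gC x i = gC x (rep i) := by
      intro i
      rcases smul_eq_zero.mp (hC0 i) with h | h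
      · exact absurd h hμ0.ne'
      · have := sub_eq_zero.mp h
        exact this
    have hzn : 0 < n := hn
    refine ⟨nplus d n ⟨0, hzn⟩, ?_, ?_, ?_, ?_⟩
    · have h1 : ⟪nplus d n ⟨0, hzn⟩, nplus d n ⟨0, hzn⟩⟫ = 1 := by
        unfold nplus
        rw [inner_mkG]
        rw [Finset.sum_eq_single_of_mem ⟨0, hzn⟩ (Finset.mem_univ _) (fun k _ hk => by simp [hk])]
        simp
      have h2 : ‖nplus d n ⟨0, hzn⟩‖ ^ 2 = 1 := by
        rw [← real_inner_self_eq_norm_sq]; exact h1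
      nlinarith [norm_nonneg (nplus d n ⟨0, hzn⟩)]
    · intro i j hij hact
      exfalso
      have h1 : gC x i = gC x j := by
        rw [hCeq i, hCeq j, hrepadj i j ⟨hij, hact⟩]
      have h2 : (0:ℝ) = gR x i + gR x j := by
        rw [← hact, h1, sub_self, norm_zero]
      have h3 := (hrad i).1
      have h4 := (hrad j).1
      linarith
    · intro i hi
      exfalso
      have := hRm i
      rw [hi] at this
      linarith
    · intro i hi
      exfalso
      have := hRm i
      rw [hi] at this
      linarith
  · have hpos : 0 < ‖l₀‖ := norm_pos_iff.mpr hne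
    have hle1 : ‖l₀‖ ≤ 1 := by
      have h2 : ‖l₀‖ ^ 2 ≤ 1 := by rw [← real_inner_self_eq_norm_sq]; exact hnorm2
      nlinarith [hpos]
    have hinv : 1 ≤ ‖l₀‖⁻¹ := by
      have h3 : ‖l₀‖⁻¹ * ‖l₀‖ = 1 := inv_mul_cancel₀ hpos.ne'
      nlinarith [inv_pos.mpr hpos, h3, hle1, hpos]
    refine ⟨‖l₀‖⁻¹ • l₀, norm_smul_inv_norm hne, ?_, ?_, ?_⟩
    · intro i j hij hact
      have hv := hcol i j hij hact
      rw [real_inner_smul_left]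
      nlinarith [hv, hinv, hc0]
    · intro i hi
      have hv : ⟪l₀, nplus d n i⟫ = c := by
        rw [hplus i, hi]
        linarith [hνc]
      rw [real_inner_smul_left, hv]
      nlinarith [hinv, hc0]
    · intro i hi
      have hv : ⟪l₀, nminus d n i⟫ = c := by
        rw [hminus i, hi]
        linarith [hνc]
      rw [real_inner_smul_left, hv]
      nlinarith [hinv, hc0]
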